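/- Let n ≥ 5 and char k = 0. If m_1, …, m_n are monomials of degree 3 in k[x_0,…,x_n] such that the 2n+1 monomials x_0^3, …, x_n^3, m_1, …, m_n are k-linearly dependent modulo x_0 + ⋯ + x_n, and no proper subset of these monomials together with all x_i^3 has this dependence property, then up to a permutation of the variables {m_1,…,m_n} = {x_0^2 x_1, x_0^2 x_2, …, x_0^2 x_n}. -/

import Mathlib

open MvPolynomial

namespace Stmt18

variable {N : ℕ}





/-- exponent vector of x_u^2 x_v -/
noncomputable def sq (u v : Fin N) : Fin N →₀ ℕ := Finsupp.single u 2 + Finsupp.single v 1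

/-- exponent vector of x_u x_v x_w -/
noncomputable def sf (u v w : Fin N) : Fin N →₀ ℕ :=
  Finsupp.single u 1 + Finsupp.single v 1 + Finsupp.single w 1

lemma sq_apply (u v s : Fin N) :
    sq u v s = (if s = u then 2 else 0) + (if s = v then 1 else 0) := by
  simp [sq, Finsupp.single_apply, eq_comm]

lemma sf_apply (u v w s : Fin N) :
    sf u v w s = (if s = u then 1 else 0) + (if s = v then 1 else 0)
      + (if s = w then 1 else 0) := by
  simp [sf, Finsupp.single_apply, eq_comm]

lemma sq_inj {u v u' v' : Fin N} (huv : u ≠ v) (huv' : u' ≠ v')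
    (h : sq u v = sq u' v') : u = u' ∧ v = v' := by
  have h1 := DFunLike.congr_fun h u
  simp only [sq_apply, if_pos rfl, if_neg huv] at h1
  have huu' : u = u' := by
    by_contra hne
    rw [if_neg hne] at h1
    split_ifs at h1 <;> omega
  subst huu'
  have h2 := DFunLike.congr_fun h v
  simp only [sq_apply, if_neg (Ne.symm huv), if_pos rfl, if_neg (Ne.symm huv')] at h2
  refine ⟨rfl, ?_⟩
  by_contra hne
  rw [if_neg hne] at h2
  split_ifs at h2 <;> omega

lemma sq_ne_sf {u v a b c : Fin N} (huv : u ≠ v) (hab : a ≠ b) (hac : a ≠ c) (hbc : b ≠ c) :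
    sq u v ≠ sf a b c := by
  intro h
  have h1 := DFunLike.congr_fun h u
  simp only [sq_apply, sf_apply, if_pos rfl, if_neg huv] at h1
  split_ifs at h1 <;> omega

lemma sq_ne_cube {u v t : Fin N} (huv : u ≠ v) :
    sq u v ≠ Finsupp.single t 3 := by
  intro h
  have h1 := DFunLike.congr_fun h v
  simp only [sq_apply, if_neg (Ne.symm huv), if_pos rfl, Finsupp.single_apply] at h1
  split_ifs at h1 <;> omega

lemma sf_ne_cube {u v w t : Fin N} (huv : u ≠ v) (huw : u ≠ w) (hvw : v ≠ w) :
    sf u v w ≠ Finsupp.single t 3 := by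
  intro h
  have h1 := DFunLike.congr_fun h u
  simp only [sf_apply, if_pos rfl, if_neg huv, if_neg huw, Finsupp.single_apply] at h1
  split_ifs at h1 <;> omega

lemma sf_inj {a b c b' c' : Fin N} (h1 : a ≠ b) (h2 : a ≠ c) (h3 : b ≠ c)
    (h1' : a ≠ b') (h2' : a ≠ c') (h3' : b' ≠ c')
    (h : sf a b c = sf a b' c') : (b = b' ∧ c = c') ∨ (b = c' ∧ c = b') := by
  have hb := DFunLike.congr_fun h b
  have hc := DFunLike.congr_fun h c
  simp only [sf_apply, if_neg (Ne.symm h1), if_pos rfl, if_neg h3] at hb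
  simp only [sf_apply, if_neg (Ne.symm h2), if_neg (Ne.symm h3), if_pos rfl] at hc
  by_cases hbb : b = b' <;> by_cases hbc' : b = c' <;> by_cases hcb : c = b' <;>
    by_cases hcc : c = c' <;> simp_all <;> omega


variable {N : ℕ}
lemma sf_comm₁ (u v w : Fin N) : sf u v w = sf v u w := by
  simp only [sf]
  abel
lemma sf_comm₂ (u v w : Fin N) : sf u v w = sf u w v := by
  simp only [sf]
  abel

lemma I1 {u v : Fin N} (huv : u ≠ v) :
    sq u v - Finsupp.single u 1 = Finsupp.single u 1 + Finsupp.single v 1 := by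
  ext s
  rw [Finsupp.tsub_apply]
  by_cases h1 : s = u <;> by_cases h2 : s = v
  · exact absurd (h1.symm.trans h2) huv
  all_goals simp_all [sq_apply, Finsupp.single_apply, Finsupp.add_apply, eq_comm]

lemma I2 {u v : Fin N} (huv : u ≠ v) :
    sq u v - Finsupp.single v 1 = Finsupp.single u 2 := by
  ext s
  rw [Finsupp.tsub_apply]
  by_cases h1 : s = u <;> by_cases h2 : s = v
  · exact absurd (h1.symm.trans h2) huv
  all_goals simp_all [sq_apply, Finsupp.single_apply, Finsupp.add_apply, eq_comm]

lemma I3 {u v w : Fin N} (huv : u ≠ v) (huw : u ≠ w) :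
    sf u v w - Finsupp.single u 1 = Finsupp.single v 1 + Finsupp.single w 1 := by
  ext s
  rw [Finsupp.tsub_apply]
  by_cases h1 : s = u <;> by_cases h2 : s = v <;> by_cases h3 : s = w
  · exact absurd (h1.symm.trans h2) huv
  · exact absurd (h1.symm.trans h2) huv
  · exact absurd (h1.symm.trans h3) huw
  all_goals simp_all [sf_apply, Finsupp.single_apply, Finsupp.add_apply, eq_comm]

lemma sq_mem_supp₁ {u v : Fin N} (huv : u ≠ v) : u ∈ (sq u v).support := by
  simp [Finsupp.mem_support_iff, sq_apply, huv]
lemma sq_mem_supp₂ {u v : Fin N} (huv : u ≠ v) : v ∈ (sq u v).support := by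
  simp [Finsupp.mem_support_iff, sq_apply, Ne.symm huv]
lemma sq_not_mem_supp {u v t : Fin N} (htu : t ≠ u) (htv : t ≠ v) : t ∉ (sq u v).support := by
  simp [Finsupp.mem_support_iff, sq_apply, htu, htv]
lemma sf_mem_supp₁ {u v w : Fin N} (huv : u ≠ v) (huw : u ≠ w) : u ∈ (sf u v w).support := by
  simp [Finsupp.mem_support_iff, sf_apply, huv, huw]
lemma sf_not_mem_supp {u v w t : Fin N} (h1 : t ≠ u) (h2 : t ≠ v) (h3 : t ≠ w) :
    t ∉ (sf u v w).support := by
  simp [Finsupp.mem_support_iff, sf_apply, h1, h2, h3]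

variable {k : Type*} [CommRing k]

lemma coeff_ell_mul (q : MvPolynomial (Fin N) k) (μ : Fin N →₀ ℕ) :
    coeff μ ((∑ t, X t) * q)
      = ∑ t, if t ∈ μ.support then coeff (μ - Finsupp.single t 1) q else 0 := by
  rw [Finset.sum_mul, coeff_sum]
  exact Finset.sum_congr rfl fun t _ => coeff_X_mul' μ t q

lemma sum_two {M : Type*} [AddCommMonoid M] (f : Fin N → M) (u v : Fin N) (huv : u ≠ v)
    (h : ∀ t, t ≠ u → t ≠ v → f t = 0) : ∑ t, f t = f u + f v := by
  rw [← Finset.sum_subset (Finset.subset_univ ({u, v} : Finset (Fin N)))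
      (fun x _ hx => h x (fun h' => hx (by simp [h'])) (fun h' => hx (by simp [h'])))]
  rw [Finset.sum_insert (by simp [huv]), Finset.sum_singleton]

lemma sum_three {M : Type*} [AddCommMonoid M] (f : Fin N → M) (u v w : Fin N)
    (huv : u ≠ v) (huw : u ≠ w) (hvw : v ≠ w)
    (h : ∀ t, t ≠ u → t ≠ v → t ≠ w → f t = 0) : ∑ t, f t = f u + (f v + f w) := by
  rw [← Finset.sum_subset (Finset.subset_univ ({u, v, w} : Finset (Fin N)))
      (fun x _ hx => h x (fun h' => hx (by simp [h'])) (fun h' => hx (by simp [h']))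
        (fun h' => hx (by simp [h'])))]
  rw [Finset.sum_insert (by simp [huv, huw]), Finset.sum_insert (by simp [hvw]),
    Finset.sum_singleton]

lemma coeff_ell_mul_sq (q : MvPolynomial (Fin N) k) {u v : Fin N} (huv : u ≠ v) :
    coeff (sq u v) ((∑ t, X t) * q)
      = coeff (Finsupp.single u 2) q
        + coeff (Finsupp.single u 1 + Finsupp.single v 1) q := by
  rw [coeff_ell_mul, sum_two _ u v huv
    (fun t htu htv => if_neg (sq_not_mem_supp htu htv)),
    if_pos (sq_mem_supp₁ huv), if_pos (sq_mem_supp₂ huv), I1 huv, I2 huv, add_comm]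

lemma coeff_ell_mul_sf (q : MvPolynomial (Fin N) k) {u v w : Fin N}
    (huv : u ≠ v) (huw : u ≠ w) (hvw : v ≠ w) :
    coeff (sf u v w) ((∑ t, X t) * q)
      = coeff (Finsupp.single v 1 + Finsupp.single w 1) q
        + (coeff (Finsupp.single u 1 + Finsupp.single w 1) q
          + coeff (Finsupp.single u 1 + Finsupp.single v 1) q) := by
  rw [coeff_ell_mul, sum_three _ u v w huv huw hvw
    (fun t h1 h2 h3 => if_neg (sf_not_mem_supp h1 h2 h3)),
    if_pos (sf_mem_supp₁ huv huw),
    if_pos (by rw [sf_comm₁]; exact sf_mem_supp₁ (Ne.symm huv) hvw),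
    if_pos (by rw [sf_comm₂, sf_comm₁]; exact sf_mem_supp₁ (Ne.symm huw) (Ne.symm hvw)),
    I3 huv huw]
  congr 2
  · rw [sf_comm₁, I3 (Ne.symm huv) hvw]
  · rw [sf_comm₂, sf_comm₁, I3 (Ne.symm huw) (Ne.symm hvw), add_comm]

lemma cube_supp (t : Fin N) : (Finsupp.single t (3:ℕ)).support = {t} :=
  Finsupp.support_single_ne_zero t (by norm_num)

lemma coeff_ell_mul_cube (q : MvPolynomial (Fin N) k) (t : Fin N) :
    coeff (Finsupp.single t 3) ((∑ s, X s) * q) = coeff (Finsupp.single t 2) q := by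
  rw [coeff_ell_mul]
  rw [Finset.sum_eq_single t]
  · rw [if_pos (by simp [cube_supp]), show Finsupp.single t 3 - Finsupp.single t 1
      = Finsupp.single t (2:ℕ) from ?_]
    ext s
    rw [Finsupp.tsub_apply]
    by_cases h : s = t <;> simp_all [Finsupp.single_apply, eq_comm]
  · intro s _ hst
    rw [if_neg (by simp [cube_supp, hst])]
  · simp


lemma sum_eq_one {α : Type*} [DecidableEq α] (S : Finset α) (g : α → ℕ) (h : ∑ x ∈ S, g x = 1) :
    ∃ v ∈ S, g v = 1 ∧ ∀ x ∈ S, x ≠ v → g x = 0 := by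
  have hev : ∃ v ∈ S, g v ≠ 0 := by
    by_contra hc
    push_neg at hc
    rw [Finset.sum_eq_zero (fun x hx => hc x hx)] at h
    omega
  obtain ⟨v, hvS, hv⟩ := hev
  have hsplit := Finset.sum_erase_add S g hvS
  have hrest : ∑ x ∈ S.erase v, g x = 0 := by omega
  refine ⟨v, hvS, by omega, fun x hx hxv => ?_⟩
  exact (Finset.sum_eq_zero_iff).mp hrest x (Finset.mem_erase.mpr ⟨hxv, hx⟩)

lemma shape3 {N : ℕ} (g : Fin (N+1) → ℕ) (h3 : ∑ s, g s = 3)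
    (hnc : ∀ t, g ≠ fun s => if s = t then 3 else 0) :
    (∃ u v, u ≠ v ∧ ∀ s, g s = (if s = u then 2 else 0) + (if s = v then 1 else 0)) ∨
    (∃ u v w, u ≠ v ∧ u ≠ w ∧ v ≠ w ∧
      ∀ s, g s = (if s = u then 1 else 0) + (if s = v then 1 else 0)
        + (if s = w then 1 else 0)) := by
  obtain ⟨u, -, hu⟩ := Finset.exists_max_image Finset.univ g ⟨0, Finset.mem_univ 0⟩
  have humax : ∀ a, g a ≤ g u := fun a => hu a (Finset.mem_univ a)
  have hle3 : g u ≤ 3 := by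
    calc g u ≤ ∑ s, g s := Finset.single_le_sum (fun i _ => Nat.zero_le _) (Finset.mem_univ u)
    _ = 3 := h3
  have hsplit := Finset.sum_erase_add Finset.univ g (Finset.mem_univ u)
  interval_cases hgu : g u
  · exfalso
    rw [Finset.sum_eq_zero (fun x _ => by have := humax x; omega)] at h3
    omega
  · -- g u = 1 : squarefree case
    have h2 : ∑ x ∈ Finset.univ.erase u, g x = 2 := by omega
    have hev : ∃ v ∈ Finset.univ.erase u, g v ≠ 0 := by
      by_contra hc
      push_neg at hc
      rw [Finset.sum_eq_zero (fun x hx => hc x hx)] at h2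
      omega
    obtain ⟨v, hvE, hv⟩ := hev
    have hvu : v ≠ u := (Finset.mem_erase.mp hvE).1
    have hgv : g v = 1 := by have := humax v; omega
    have hsplit2 := Finset.sum_erase_add (Finset.univ.erase u) g hvE
    have h1 : ∑ x ∈ (Finset.univ.erase u).erase v, g x = 1 := by omega
    obtain ⟨w, hwE, hgw, hrest⟩ := sum_eq_one _ _ h1
    have hwv : w ≠ v := (Finset.mem_erase.mp hwE).1
    have hwu : w ≠ u := (Finset.mem_erase.mp (Finset.mem_erase.mp hwE).2).1
    right
    refine ⟨u, v, w, Ne.symm hvu, Ne.symm hwu, Ne.symm hwv, fun s => ?_⟩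
    by_cases hsu : s = u
    · simp [hsu, hvu, hwu, Ne.symm hvu, Ne.symm hwu, hgu]
    · by_cases hsv : s = v
      · simp [hsv, hvu, hwv, Ne.symm hwv, hgv]
      · by_cases hsw : s = w
        · simp [hsw, hwu, hwv, hgw]
        · have := hrest s (by simp [Finset.mem_erase, hsu, hsv]) hsw
          simp [hsu, hsv, hsw, this]
  · -- g u = 2
    have h1 : ∑ x ∈ Finset.univ.erase u, g x = 1 := by omega
    obtain ⟨v, hvE, hgv, hrest⟩ := sum_eq_one _ _ h1
    have hvu : v ≠ u := (Finset.mem_erase.mp hvE).1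
    left
    refine ⟨u, v, Ne.symm hvu, fun s => ?_⟩
    by_cases hsu : s = u
    · simp [hsu, Ne.symm hvu, hgu]
    · by_cases hsv : s = v
      · simp [hsv, hvu, hgv]
      · have := hrest s (by simp [Finset.mem_erase, hsu]) hsv
        simp [hsu, hsv, this]
  · -- g u = 3 : cube, contradiction
    exfalso
    apply hnc u
    funext s
    by_cases hsu : s = u
    · simp [hsu, hgu]
    · have h0 : ∑ x ∈ Finset.univ.erase u, g x = 0 := by omega
      have := (Finset.sum_eq_zero_iff).mp h0 s (by simp [Finset.mem_erase, hsu])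
      simp [hsu, this]

variable {k : Type*} [Field k] [CharZero k]

lemma core {n : ℕ} (hn : 5 ≤ n)
    (mu : Fin n → Fin (n+1) →₀ ℕ)
    (hmuinj : Function.Injective mu)
    (d : Fin (n+1) → k) (f : Fin (n+1) → Fin (n+1) → k)
    (hfsymm : ∀ u v, f u v = f v u)
    (cE : (Fin (n+1) →₀ ℕ) → k)
    (hsq : ∀ u v, u ≠ v → cE (sq u v) = d u + f u v)
    (hsf : ∀ u v w, u ≠ v → u ≠ w → v ≠ w → cE (sf u v w) = f u v + f u w + f v w)
    (hshape : ∀ j, (∃ u v, u ≠ v ∧ mu j = sq u v) ∨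
        (∃ u v w, u ≠ v ∧ u ≠ w ∧ v ≠ w ∧ mu j = sf u v w))
    (hex : ∀ μ, cE μ ≠ 0 →
      ((∃ u v, u ≠ v ∧ μ = sq u v) ∨ (∃ u v w, u ≠ v ∧ u ≠ w ∧ v ≠ w ∧ μ = sf u v w)) →
      ∃ j, mu j = μ)
    (hB : ∀ j, cE (mu j) ≠ 0) :
    ∃ t, (∀ j, ∃ v, v ≠ t ∧ mu j = sq t v) ∧ (∀ v, v ≠ t → ∃ j, mu j = sq t v) := by
  classical
  -- choice function J
  set J : (Fin (n+1) →₀ ℕ) → Fin n := fun μ =>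
    if h : ∃ j, mu j = μ then h.choose else ⟨0, by omega⟩ with hJdef
  have hJ : ∀ μ, (∃ j, mu j = μ) → mu (J μ) = μ := by
    intro μ h
    simp only [hJdef, dif_pos h]
    exact h.choose_spec
  -- nonedge
  set NE : Fin (n+1) → Fin (n+1) → Prop := fun u v =>
    u ≠ v ∧ (cE (sq u v) ≠ 0 ∨ cE (sq v u) ≠ 0) with hNEdef
  have hNEsymm : ∀ u v, NE u v → NE v u := by
    intro u v ⟨h1, h2⟩; exact ⟨h1.symm, h2.symm⟩
  set cm : Fin (n+1) → Fin (n+1) → (Fin (n+1) →₀ ℕ) := fun u v =>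
    if cE (sq u v) ≠ 0 then sq u v else sq v u with hcmdef
  have hcm : ∀ u v, NE u v → cE (cm u v) ≠ 0 ∧ (cm u v = sq u v ∨ cm u v = sq v u) := by
    intro u v ⟨h1, h2⟩
    simp only [hcmdef]
    by_cases h : cE (sq u v) ≠ 0
    · rw [if_pos h]; exact ⟨h, Or.inl rfl⟩
    · rw [if_neg h]
      push_neg at h
      exact ⟨h2.resolve_left (by simp [h]), Or.inr rfl⟩
  have hcmex : ∀ u v, NE u v → mu (J (cm u v)) = cm u v := by
    intro u v hne
    apply hJ
    apply hex _ (hcm u v hne).1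
    rcases (hcm u v hne).2 with h | h
    · exact Or.inl ⟨u, v, hne.1, h⟩
    · exact Or.inl ⟨v, u, hne.1.symm, h⟩
  have hedge : ∀ u v, u ≠ v → ¬ NE u v → d u + f u v = 0 ∧ d u = d v := by
    intro u v huv hne
    simp only [hNEdef, not_and_or, not_or, not_not] at hne
    rcases hne with h | ⟨h1, h2⟩
    · exact absurd h huv
    · rw [hsq u v huv] at h1
      rw [hsq v u huv.symm] at h2
      refine ⟨h1, ?_⟩
      rw [hfsymm v u] at h2
      linear_combination h1 - h2
  have hcross : ∀ u v, u ≠ v → d u ≠ d v → NE u v := by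
    intro u v huv hd
    by_contra hne
    exact hd (hedge u v huv hne).2
  have hcmpair : ∀ u v u' v', NE u v → NE u' v' → cm u v = cm u' v' →
      (u = u' ∧ v = v') ∨ (u = v' ∧ v = u') := by
    intro u v u' v' h h' heq
    rcases (hcm u v h).2 with h1 | h1 <;> rcases (hcm u' v' h').2 with h2 | h2 <;>
      rw [h1, h2] at heq
    · exact Or.inl (sq_inj h.1 h'.1 heq)
    · exact Or.inr (sq_inj h.1 h'.1.symm heq)
    · obtain ⟨e1, e2⟩ := sq_inj h.1.symm h'.1 heq
      exact Or.inr ⟨e2, e1⟩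
    · obtain ⟨e1, e2⟩ := sq_inj h.1.symm h'.1.symm heq
      exact Or.inl ⟨e2, e1⟩
  have hboolne : ∀ (v w : Fin (n+1)), v ≠ w → decide (v < w) = decide (w < v) → False := by
    intro v w hvw hd
    have hiff := decide_eq_decide.mp hd
    rcases lt_or_gt_of_ne hvw with h | h
    · exact lt_asymm h (hiff.mp h)
    · exact lt_asymm h (hiff.mpr h)
  by_cases hconst : ∀ u v, d u = d v
  · -- CASE A : d constant. Derive a contradiction.
    exfalso
    -- A-a : find a vertex with at most one nonedge partner
    have hA : ∃ u₀, ∀ v w, NE u₀ v → NE u₀ w → v = w := by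
      by_contra hA'
      push_neg at hA'
      choose V W hV hW hVW using hA'
      set sel : Fin (n+1) → Bool → Fin (n+1) := fun u i => if i then V u else W u with hseldef
      have hsel : ∀ u i, NE u (sel u i) := by
        intro u i
        cases i <;> simp only [hseldef, if_true, if_false, Bool.false_eq_true] <;>
          [exact hW u; exact hV u]
      have hselne : ∀ u, sel u true ≠ sel u false := by
        intro u
        simp only [hseldef, if_true, if_false]
        exact hVW u
      set Ψ : Fin (n+1) × Bool → Fin n × Bool := fun p =>
        (J (cm p.1 (sel p.1 p.2)), decide (p.1 < sel p.1 p.2)) with hΨdef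
      have hinj : Function.Injective Ψ := by
        rintro ⟨u, i⟩ ⟨u', i'⟩ heq
        simp only [hΨdef, Prod.mk.injEq] at heq
        have hcmeq : cm u (sel u i) = cm u' (sel u' i') := by
          rw [← hcmex u (sel u i) (hsel u i), ← hcmex u' (sel u' i') (hsel u' i')]
          exact congrArg mu heq.1
        rcases hcmpair _ _ _ _ (hsel u i) (hsel u' i') hcmeq with ⟨h1, h2⟩ | ⟨h1, h2⟩
        · subst h1
          have hii : i = i' := by
            cases i <;> cases i'
            · rfl
            · exact absurd h2.symm (hselne u)
            · exact absurd h2 (hselne u)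
            · rfl
          subst hii
          rfl
        · exfalso
          apply hboolne u (sel u i) (hsel u i).1
          rw [heq.2, ← h1, ← h2]
      have hcards := Fintype.card_le_of_injective Ψ hinj
      simp only [Fintype.card_prod, Fintype.card_fin, Fintype.card_bool] at hcards
      omega
    obtain ⟨u₀, hu₀⟩ := hA
    set e₀ := d u₀ with he₀def
    set U : Finset (Fin (n+1)) := Finset.univ.filter (fun v => v ≠ u₀ ∧ ¬ NE u₀ v) with hUdef
    have hUcard : n - 1 ≤ U.card := by
      have hfil : (Finset.univ.filter (fun v => NE u₀ v)).card ≤ 1 := by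
        apply Finset.card_le_one.mpr
        intro a ha b hb
        exact hu₀ a b (Finset.mem_filter.mp ha).2 (Finset.mem_filter.mp hb).2
      have hsub : (Finset.univ : Finset (Fin (n+1))) ⊆
          insert u₀ (U ∪ Finset.univ.filter (fun v => NE u₀ v)) := by
        intro x _
        by_cases hx : x = u₀
        · simp [hx]
        · by_cases hNEx : NE u₀ x
          · exact Finset.mem_insert_of_mem (Finset.mem_union_right _
              (Finset.mem_filter.mpr ⟨Finset.mem_univ x, hNEx⟩))
          · exact Finset.mem_insert_of_mem (Finset.mem_union_left _
              (Finset.mem_filter.mpr ⟨Finset.mem_univ x, hx, hNEx⟩))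
      have h1 := Finset.card_le_card hsub
      have h2 := Finset.card_insert_le u₀ (U ∪ Finset.univ.filter (fun v => NE u₀ v))
      have h3 := Finset.card_union_le U (Finset.univ.filter (fun v => NE u₀ v))
      rw [Finset.card_univ, Fintype.card_fin] at h1
      omega
    have hUprop : ∀ v ∈ U, v ≠ u₀ ∧ ¬ NE u₀ v := by
      intro v hv
      simpa [hUdef] using hv
    by_cases he₀ : e₀ = 0
    · -- A-c
      by_cases hf : ∃ p q, p ≠ q ∧ f p q ≠ 0
      · obtain ⟨p, q, hpq, hfpq⟩ := hf
        have hd0 : ∀ u, d u = 0 := fun u => (hconst u u₀).trans he₀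
        have hcEsq : ∀ a b, a ≠ b → cE (sq a b) = f a b := by
          intro a b hab
          rw [hsq a b hab, hd0 a, zero_add]
        have hqp' : cE (sq q p) ≠ 0 := by
          rw [hcEsq q p hpq.symm, hfsymm q p]; exact hfpq
        have hpq' : cE (sq p q) ≠ 0 := by rw [hcEsq p q hpq]; exact hfpq
        set θ : Fin (n+1) → (Fin (n+1) →₀ ℕ) := fun x =>
          if x = p then sq p q else if x = q then sq q p else
            if cE (sq p x) ≠ 0 then sq p x else if cE (sq q x) ≠ 0 then sq q x else sf p q x
          with hθdef
        have hθp : θ p = sq p q := by simp [hθdef]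
        have hθq : θ q = sq q p := by simp [hθdef, Ne.symm hpq]
        have hθval : ∀ x, x ≠ p → x ≠ q →
            ((θ x = sq p x ∨ θ x = sq q x) ∨ θ x = sf p q x) ∧ cE (θ x) ≠ 0 := by
          intro x hxp hxq
          simp only [hθdef]
          rw [if_neg hxp, if_neg hxq]
          by_cases h1 : cE (sq p x) ≠ 0
          · rw [if_pos h1]
            exact ⟨Or.inl (Or.inl rfl), h1⟩
          · rw [if_neg h1]
            by_cases h2 : cE (sq q x) ≠ 0
            · rw [if_pos h2]
              exact ⟨Or.inl (Or.inr rfl), h2⟩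
            · rw [if_neg h2]
              push_neg at h1 h2
              refine ⟨Or.inr rfl, ?_⟩
              rw [hsf p q x hpq (Ne.symm hxp) (Ne.symm hxq)]
              rw [hcEsq p x (Ne.symm hxp)] at h1
              rw [hcEsq q x (Ne.symm hxq)] at h2
              rw [h1, h2, add_zero, add_zero]
              exact hfpq
        have hmuθ : ∀ x, mu (J (θ x)) = θ x := by
          intro x
          apply hJ
          by_cases hxp : x = p
          · rw [hxp, hθp]
            exact hex _ hpq' (Or.inl ⟨p, q, hpq, rfl⟩)
          · by_cases hxq : x = q
            · rw [hxq, hθq]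
              exact hex _ hqp' (Or.inl ⟨q, p, Ne.symm hpq, rfl⟩)
            · obtain ⟨hcase, hne0⟩ := hθval x hxp hxq
              apply hex _ hne0
              rcases hcase with (h | h) | h
              · exact Or.inl ⟨p, x, Ne.symm hxp, h⟩
              · exact Or.inl ⟨q, x, Ne.symm hxq, h⟩
              · exact Or.inr ⟨p, q, x, hpq, Ne.symm hxp, Ne.symm hxq, h⟩
        have hinj : Function.Injective (fun x => J (θ x)) := by
          intro x y heq
          have hθeq : θ x = θ y := by
            rw [← hmuθ x, ← hmuθ y]
            exact congrArg mu heq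
          by_cases hxp : x = p <;> by_cases hyp : y = p
          · rw [hxp, hyp]
          all_goals (try subst hxp) <;> (try subst hyp)
          · -- x = p, y ≠ p
            exfalso
            rw [hθp] at hθeq
            by_cases hyq : y = q
            · rw [hyq, hθq] at hθeq
              exact hpq (sq_inj hpq (Ne.symm hpq) hθeq).1
            · obtain ⟨hcase, -⟩ := hθval y hyp hyq
              rcases hcase with (h | h) | h <;> rw [h] at hθeq
              · exact hyq (sq_inj hpq (Ne.symm hyp) hθeq).2.symm
              · exact hpq (sq_inj hpq (Ne.symm hyq) hθeq).1
              · exact sq_ne_sf hpq hpq (Ne.symm hyp) (Ne.symm hyq) hθeq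
          · -- y = p, x ≠ p
            exfalso
            rw [hθp] at hθeq
            replace hθeq := hθeq.symm
            by_cases hxq : x = q
            · rw [hxq, hθq] at hθeq
              exact hpq (sq_inj hpq (Ne.symm hpq) hθeq).1
            · obtain ⟨hcase, -⟩ := hθval x hxp hxq
              rcases hcase with (h | h) | h <;> rw [h] at hθeq
              · exact hxq (sq_inj hpq (Ne.symm hxp) hθeq).2.symm
              · exact hpq (sq_inj hpq (Ne.symm hxq) hθeq).1
              · exact sq_ne_sf hpq hpq (Ne.symm hxp) (Ne.symm hxq) hθeq
          · -- x, y ≠ p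
            by_cases hxq : x = q <;> by_cases hyq : y = q
            · rw [hxq, hyq]
            · exfalso
              rw [hxq, hθq] at hθeq
              obtain ⟨hcase, -⟩ := hθval y hyp hyq
              rcases hcase with (h | h) | h <;> rw [h] at hθeq
              · exact hpq (sq_inj (Ne.symm hpq) (Ne.symm hyp) hθeq).1.symm
              · exact hyp (sq_inj (Ne.symm hpq) (Ne.symm hyq) hθeq).2.symm
              · exact sq_ne_sf (Ne.symm hpq) hpq (Ne.symm hyp) (Ne.symm hyq) hθeq
            · exfalso
              rw [hyq, hθq] at hθeq
              replace hθeq := hθeq.symm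
              obtain ⟨hcase, -⟩ := hθval x hxp hxq
              rcases hcase with (h | h) | h <;> rw [h] at hθeq
              · exact hpq (sq_inj (Ne.symm hpq) (Ne.symm hxp) hθeq).1.symm
              · exact hxp (sq_inj (Ne.symm hpq) (Ne.symm hxq) hθeq).2.symm
              · exact sq_ne_sf (Ne.symm hpq) hpq (Ne.symm hxp) (Ne.symm hxq) hθeq
            · obtain ⟨hcasex, -⟩ := hθval x hxp hxq
              obtain ⟨hcasey, -⟩ := hθval y hyp hyq
              rcases hcasex with (h1 | h1) | h1 <;> rcases hcasey with (h2 | h2) | h2 <;>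
                rw [h1, h2] at hθeq
              · exact (sq_inj (Ne.symm hxp) (Ne.symm hyp) hθeq).2
              · exact absurd (sq_inj (Ne.symm hxp) (Ne.symm hyq) hθeq).1 hpq
              · exact absurd hθeq (sq_ne_sf (Ne.symm hxp) hpq (Ne.symm hyp) (Ne.symm hyq))
              · exact absurd (sq_inj (Ne.symm hxq) (Ne.symm hyp) hθeq).1.symm hpq
              · exact (sq_inj (Ne.symm hxq) (Ne.symm hyq) hθeq).2
              · exact absurd hθeq (sq_ne_sf (Ne.symm hxq) hpq (Ne.symm hyp) (Ne.symm hyq))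
              · exact absurd hθeq.symm (sq_ne_sf (Ne.symm hyp) hpq (Ne.symm hxp) (Ne.symm hxq))
              · exact absurd hθeq.symm (sq_ne_sf (Ne.symm hyq) hpq (Ne.symm hxp) (Ne.symm hxq))
              · rcases sf_inj hpq (Ne.symm hxp) (Ne.symm hxq) hpq (Ne.symm hyp) (Ne.symm hyq)
                  hθeq with ⟨-, h⟩ | ⟨h, -⟩
                · exact h
                · exact absurd h.symm hyq
        have hcards := Fintype.card_le_of_injective _ hinj
        simp only [Fintype.card_fin] at hcards
        omega
      · push_neg at hf
        have hd0 : ∀ u, d u = 0 := fun u => (hconst u u₀).trans he₀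
        obtain ⟨j⟩ : Nonempty (Fin n) := ⟨⟨0, by omega⟩⟩
        apply hB j
        rcases hshape j with ⟨u, v, huv, h⟩ | ⟨u, v, w, h1, h2, h3, h⟩
        · rw [h, hsq u v huv, hd0, hf u v huv, add_zero]
        · rw [h, hsf u v w h1 h2 h3, hf u v h1, hf u w h2, hf v w h3]
          ring
    · -- A-b : e₀ ≠ 0
      have hd0 : ∀ u, d u = e₀ := fun u => hconst u u₀
      have hedgef : ∀ a b, a ≠ b → ¬ NE a b → f a b = -e₀ := by
        intro a b hab h
        have h1 := (hedge a b hab h).1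
        rw [hd0 a] at h1
        linear_combination h1
      set θ₂ : Fin (n+1) → Fin (n+1) → (Fin (n+1) →₀ ℕ) := fun v w =>
        if NE v w then cm v w else sf u₀ v w with hθ₂def
      have hθ₂val : ∀ v w, v ∈ U → w ∈ U → v ≠ w →
          ((∃ a b, NE a b ∧ ((a = v ∧ b = w) ∨ (a = w ∧ b = v)) ∧ θ₂ v w = cm a b) ∨
            θ₂ v w = sf u₀ v w) ∧ cE (θ₂ v w) ≠ 0 ∧ (∃ j, mu j = θ₂ v w) := by
        intro v w hv hw hvw
        obtain ⟨hvu₀, hvNE⟩ := hUprop v hv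
        obtain ⟨hwu₀, hwNE⟩ := hUprop w hw
        simp only [hθ₂def]
        by_cases hNE : NE v w
        · rw [if_pos hNE]
          refine ⟨Or.inl ⟨v, w, hNE, Or.inl ⟨rfl, rfl⟩, rfl⟩, (hcm v w hNE).1, ?_⟩
          apply hex _ (hcm v w hNE).1
          rcases (hcm v w hNE).2 with h | h
          · exact Or.inl ⟨v, w, hvw, h⟩
          · exact Or.inl ⟨w, v, hvw.symm, h⟩
        · rw [if_neg hNE]
          have hfvw : f v w = -e₀ := hedgef v w hvw hNE
          have hfv : f u₀ v = -e₀ := hedgef u₀ v (Ne.symm hvu₀) hvNE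
          have hfw : f u₀ w = -e₀ := hedgef u₀ w (Ne.symm hwu₀) hwNE
          have hne0 : cE (sf u₀ v w) ≠ 0 := by
            rw [hsf u₀ v w (Ne.symm hvu₀) (Ne.symm hwu₀) hvw, hfv, hfw, hfvw]
            intro hc
            apply he₀
            have h3 : (3 : k) * e₀ = 0 := by linear_combination -hc
            rcases mul_eq_zero.mp h3 with h | h
            · exact absurd h three_ne_zero
            · exact h
          exact ⟨Or.inr rfl, hne0,
            hex _ hne0 (Or.inr ⟨u₀, v, w, Ne.symm hvu₀, Ne.symm hwu₀, hvw, rfl⟩)⟩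
      have hinjOn : Set.InjOn
          (fun pr : Fin (n+1) × Fin (n+1) => ((J (θ₂ pr.1 pr.2), decide (pr.1 < pr.2)) : Fin n × Bool))
          ↑U.offDiag := by
        rintro ⟨v, w⟩ hvw' ⟨v', w'⟩ hvw'' heq
        obtain ⟨hv, hw, hvw⟩ := Finset.mem_offDiag.mp (Finset.mem_coe.mp hvw')
        obtain ⟨hv', hw', hvw2⟩ := Finset.mem_offDiag.mp (Finset.mem_coe.mp hvw'')
        simp only [Prod.mk.injEq] at heq
        obtain ⟨hcase1, -, hexist1⟩ := hθ₂val v w hv hw hvw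
        obtain ⟨hcase2, -, hexist2⟩ := hθ₂val v' w' hv' hw' hvw2
        have hθeq : θ₂ v w = θ₂ v' w' := by
          rw [← hJ _ hexist1, ← hJ _ hexist2]
          exact congrArg mu heq.1
        have hvu₀ := (hUprop v hv).1
        have hwu₀ := (hUprop w hw).1
        have hvu₀' := (hUprop v' hv').1
        have hwu₀' := (hUprop w' hw').1
        have hpair : (v = v' ∧ w = w') ∨ (v = w' ∧ w = v') := by
          rcases hcase1 with ⟨a, b, hab, hor, hcm1⟩ | h1 <;>
            rcases hcase2 with ⟨a', b', hab', hor', hcm2⟩ | h2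
          · rw [hcm1, hcm2] at hθeq
            rcases hcmpair a b a' b' hab hab' hθeq with ⟨e1, e2⟩ | ⟨e1, e2⟩ <;>
              rcases hor with ⟨rfl, rfl⟩ | ⟨rfl, rfl⟩ <;>
              rcases hor' with ⟨rfl, rfl⟩ | ⟨rfl, rfl⟩
            · exact Or.inl ⟨e1, e2⟩
            · exact Or.inr ⟨e1, e2⟩
            · exact Or.inr ⟨e2, e1⟩
            · exact Or.inl ⟨e2, e1⟩
            · exact Or.inr ⟨e1, e2⟩
            · exact Or.inl ⟨e1, e2⟩
            · exact Or.inl ⟨e2, e1⟩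
            · exact Or.inr ⟨e2, e1⟩
          · exfalso
            rw [hcm1, h2] at hθeq
            rcases (hcm a b hab).2 with h | h <;> rw [h] at hθeq
            · exact sq_ne_sf hab.1 (Ne.symm hvu₀') (Ne.symm hwu₀') hvw2 hθeq
            · exact sq_ne_sf hab.1.symm (Ne.symm hvu₀') (Ne.symm hwu₀') hvw2 hθeq
          · exfalso
            rw [h1, hcm2] at hθeq
            replace hθeq := hθeq.symm
            rcases (hcm a' b' hab').2 with h | h <;> rw [h] at hθeq
            · exact sq_ne_sf hab'.1 (Ne.symm hvu₀) (Ne.symm hwu₀) hvw hθeq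
            · exact sq_ne_sf hab'.1.symm (Ne.symm hvu₀) (Ne.symm hwu₀) hvw hθeq
          · rw [h1, h2] at hθeq
            rcases sf_inj (Ne.symm hvu₀) (Ne.symm hwu₀) hvw
              (Ne.symm hvu₀') (Ne.symm hwu₀') hvw2 hθeq with ⟨e1, e2⟩ | ⟨e1, e2⟩
            · exact Or.inl ⟨e1, e2⟩
            · exact Or.inr ⟨e1, e2⟩
        rcases hpair with ⟨rfl, rfl⟩ | ⟨rfl, rfl⟩
        · rfl
        · exact absurd heq.2 (fun hc => hboolne _ _ hvw hc)
      have hcards := Finset.card_le_card_of_injOn _ (fun a _ => Finset.mem_univ _) hinjOn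
      rw [Finset.offDiag_card, Finset.card_univ, Fintype.card_prod, Fintype.card_fin,
        Fintype.card_bool] at hcards
      have h2' := Nat.sub_le_iff_le_add.mp hcards
      have h4 : 4 ≤ U.card := by omega
      have hmul : 4 * U.card ≤ U.card * U.card := Nat.mul_le_mul_right U.card h4
      have ha' : n ≤ U.card + 1 := by omega
      linarith
  · -- CASE B
    push_neg at hconst
    obtain ⟨u₀, v₀, hd01⟩ := hconst
    have h01 : u₀ ≠ v₀ := by rintro rfl; exact hd01 rfl
    have hBa : ∀ p q, p ≠ u₀ → p ≠ v₀ → q ≠ u₀ → q ≠ v₀ → d p = d q := by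
      intro p q hp1 hp2 hq1 hq2
      by_contra hdpq
      have hpq : p ≠ q := by rintro rfl; exact hdpq rfl
      set pt : Fin (n+1) → Fin (n+1) := fun w => if d w ≠ d u₀ then u₀ else v₀ with hptdef
      have hpt : ∀ w, w ≠ u₀ → w ≠ v₀ → NE w (pt w) ∧ (pt w = u₀ ∨ pt w = v₀) := by
        intro w h1 h2
        simp only [hptdef]
        by_cases hd : d w ≠ d u₀
        · rw [if_pos hd]
          exact ⟨hcross w u₀ h1 hd, Or.inl rfl⟩
        · rw [if_neg hd]
          push_neg at hd
          exact ⟨hcross w v₀ h2 (by rw [hd]; exact hd01), Or.inr rfl⟩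
      have hNE01 : NE u₀ v₀ := hcross u₀ v₀ h01 hd01
      have hNEpq : NE p q := hcross p q hpq hdpq
      set τ : Fin (n+1) → (Fin (n+1) →₀ ℕ) := fun x =>
        if x = u₀ then cm u₀ v₀ else if x = v₀ then cm p q else cm x (pt x) with hτdef
      set Φ : Fin (n+1) → Fin n := fun x => J (τ x) with hΦdef
      have hτcm : ∀ x, ∃ a b, NE a b ∧ τ x = cm a b := by
        intro x
        by_cases hx1 : x = u₀
        · exact ⟨u₀, v₀, hNE01, by simp only [hτdef]; rw [if_pos hx1]⟩
        · by_cases hx2 : x = v₀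
          · exact ⟨p, q, hNEpq, by simp only [hτdef]; rw [if_neg hx1, if_pos hx2]⟩
          · exact ⟨x, pt x, (hpt x hx1 hx2).1,
              by simp only [hτdef]; rw [if_neg hx1, if_neg hx2]⟩
      have hmuΦ : ∀ x, mu (Φ x) = τ x := by
        intro x
        obtain ⟨a, b, hab, habeq⟩ := hτcm x
        show mu (J (τ x)) = τ x
        rw [habeq]
        exact hcmex a b hab
      have hinj : Function.Injective Φ := by
        intro x y heq
        have hτeq : τ x = τ y := by rw [← hmuΦ x, ← hmuΦ y, heq]
        simp only [hτdef] at hτeq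
        by_cases hx1 : x = u₀ <;> by_cases hy1 : y = u₀
        · rw [hx1, hy1]
        · exfalso
          rw [if_pos hx1, if_neg hy1] at hτeq
          by_cases hy2 : y = v₀
          · rw [if_pos hy2] at hτeq
            rcases hcmpair _ _ _ _ hNE01 hNEpq hτeq with ⟨h1, -⟩ | ⟨h1, -⟩
            · exact hp1 h1.symm
            · exact hq1 h1.symm
          · rw [if_neg hy2] at hτeq
            rcases hcmpair _ _ _ _ hNE01 (hpt y hy1 hy2).1 hτeq with ⟨h1, -⟩ | ⟨-, h2⟩
            · exact hy1 h1.symm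
            · exact hy2 h2.symm
        · exfalso
          rw [if_pos hy1, if_neg hx1] at hτeq
          replace hτeq := hτeq.symm
          by_cases hx2 : x = v₀
          · rw [if_pos hx2] at hτeq
            rcases hcmpair _ _ _ _ hNE01 hNEpq hτeq with ⟨h1, -⟩ | ⟨h1, -⟩
            · exact hp1 h1.symm
            · exact hq1 h1.symm
          · rw [if_neg hx2] at hτeq
            rcases hcmpair _ _ _ _ hNE01 (hpt x hx1 hx2).1 hτeq with ⟨h1, -⟩ | ⟨-, h2⟩
            · exact hx1 h1.symm
            · exact hx2 h2.symm
        · rw [if_neg hx1, if_neg hy1] at hτeq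
          by_cases hx2 : x = v₀ <;> by_cases hy2 : y = v₀
          · rw [hx2, hy2]
          · exfalso
            rw [if_pos hx2, if_neg hy2] at hτeq
            rcases hcmpair _ _ _ _ hNEpq (hpt y hy1 hy2).1 hτeq with ⟨-, h2⟩ | ⟨h1, -⟩
            · rcases (hpt y hy1 hy2).2 with h | h <;> rw [h] at h2
              · exact hq1 h2
              · exact hq2 h2
            · rcases (hpt y hy1 hy2).2 with h | h <;> rw [h] at h1
              · exact hp1 h1
              · exact hp2 h1
          · exfalso
            rw [if_pos hy2, if_neg hx2] at hτeq
            replace hτeq := hτeq.symm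
            rcases hcmpair _ _ _ _ hNEpq (hpt x hx1 hx2).1 hτeq with ⟨-, h2⟩ | ⟨h1, -⟩
            · rcases (hpt x hx1 hx2).2 with h | h <;> rw [h] at h2
              · exact hq1 h2
              · exact hq2 h2
            · rcases (hpt x hx1 hx2).2 with h | h <;> rw [h] at h1
              · exact hp1 h1
              · exact hp2 h1
          · rw [if_neg hx2, if_neg hy2] at hτeq
            rcases hcmpair _ _ _ _ (hpt x hx1 hx2).1 (hpt y hy1 hy2).1 hτeq with
              ⟨h1, -⟩ | ⟨h1, -⟩
            · exact h1
            · exfalso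
              rcases (hpt y hy1 hy2).2 with h | h <;> rw [h] at h1
              · exact hx1 h1
              · exact hx2 h1
      have hcards := Fintype.card_le_of_injective Φ hinj
      simp only [Fintype.card_fin] at hcards
      omega
    obtain ⟨w₁, hw₁⟩ : ∃ w, w ≠ u₀ ∧ w ≠ v₀ := by
      by_contra h
      push_neg at h
      have hsub : (Finset.univ : Finset (Fin (n+1))) ⊆ {u₀, v₀} := by
        intro x _
        by_cases h1 : x = u₀
        · simp [h1]
        · simp [h x h1]
      have h1 := Finset.card_le_card hsub
      have h2 : ({u₀, v₀} : Finset (Fin (n+1))).card ≤ 2 :=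
        (Finset.card_insert_le _ _).trans (by simp)
      rw [Finset.card_univ, Fintype.card_fin] at h1
      omega
    set e' := d w₁ with he'def
    have hBa' : ∀ w, w ≠ u₀ → w ≠ v₀ → d w = e' := fun w h1 h2 =>
      hBa w w₁ h1 h2 hw₁.1 hw₁.2
    have hBb : d u₀ = e' ∨ d v₀ = e' := by
      by_contra hBb'
      push_neg at hBb'
      set W : Finset (Fin (n+1)) := Finset.univ.filter (fun w => w ≠ u₀ ∧ w ≠ v₀) with hWdef
      have hWprop : ∀ w ∈ W, w ≠ u₀ ∧ w ≠ v₀ := fun w hw => (Finset.mem_filter.mp hw).2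
      have hWcard : n - 1 ≤ W.card := by
        have hsub : (Finset.univ : Finset (Fin (n+1))) ⊆ W ∪ {u₀, v₀} := by
          intro x _
          by_cases h1 : x = u₀
          · simp [h1]
          · by_cases h2 : x = v₀
            · simp [h2]
            · simp [hWdef, Finset.mem_union, Finset.mem_filter, h1, h2]
        have h1 := Finset.card_le_card hsub
        have h2 := Finset.card_union_le W ({u₀, v₀} : Finset (Fin (n+1)))
        have h3 : ({u₀, v₀} : Finset (Fin (n+1))).card ≤ 2 :=
          (Finset.card_insert_le _ _).trans (by simp)
        rw [Finset.card_univ, Fintype.card_fin] at h1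
        omega
      set pr : Bool → Fin (n+1) := fun i => if i then u₀ else v₀ with hprdef
      have hNEW : ∀ w, w ≠ u₀ → w ≠ v₀ → ∀ i, NE w (pr i) := by
        intro w h1 h2 i
        cases i <;> simp only [hprdef, if_true, if_false, Bool.false_eq_true]
        · exact hcross w v₀ h2 (by rw [hBa' w h1 h2]; exact fun hc => hBb'.2 hc.symm)
        · exact hcross w u₀ h1 (by rw [hBa' w h1 h2]; exact fun hc => hBb'.1 hc.symm)
      have hinjOn : Set.InjOn (fun p : Fin (n+1) × Bool => J (cm p.1 (pr p.2)))
          ↑(W ×ˢ (Finset.univ : Finset Bool)) := by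
        rintro ⟨w, i⟩ hw ⟨w', i'⟩ hw' heq
        have hwW := hWprop w (Finset.mem_product.mp (Finset.mem_coe.mp hw)).1
        have hw'W := hWprop w' (Finset.mem_product.mp (Finset.mem_coe.mp hw')).1
        have h1 := hNEW w hwW.1 hwW.2 i
        have h2 := hNEW w' hw'W.1 hw'W.2 i'
        have hcmeq : cm w (pr i) = cm w' (pr i') := by
          rw [← hcmex _ _ h1, ← hcmex _ _ h2]
          exact congrArg mu heq
        rcases hcmpair _ _ _ _ h1 h2 hcmeq with ⟨e1, e2⟩ | ⟨e1, e2⟩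
        · have hii : i = i' := by
            cases i <;> cases i'
            · rfl
            · exact absurd e2 (Ne.symm h01)
            · exact absurd e2 h01
            · rfl
          rw [e1, hii]
        · exfalso
          cases i' <;> simp only [hprdef, if_true, if_false, Bool.false_eq_true] at e1
          · exact hwW.2 e1
          · exact hwW.1 e1
      have hcards := Finset.card_le_card_of_injOn _ (fun a _ => Finset.mem_univ _) hinjOn
      rw [Finset.card_product, Finset.card_univ, Fintype.card_bool, Finset.card_univ,
        Fintype.card_fin] at hcards
      omega
    set t : Fin (n+1) := if d u₀ = e' then v₀ else u₀ with htdef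
    have ht1 : d t ≠ e' := by
      simp only [htdef]
      split_ifs with h
      · intro hc; exact hd01 (h.trans hc.symm)
      · exact h
    have ht2 : ∀ u, u ≠ t → d u = e' := by
      intro u hu
      simp only [htdef] at hu
      split_ifs at hu with h
      · by_cases hu0 : u = u₀
        · rw [hu0]; exact h
        · exact hBa' u hu0 hu
      · have hv0 : d v₀ = e' := hBb.resolve_left h
        by_cases huv : u = v₀
        · rw [huv]; exact hv0
        · exact hBa' u hu huv
    -- B2 : each pair (t,v) is a nonedge
    have hNEt : ∀ v, v ≠ t → NE t v := by
      intro v hv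
      exact hcross t v (Ne.symm hv) (by rw [ht2 v hv]; exact ht1)
    -- surjectivity
    have hsurj : ∀ j, ∃ v, v ≠ t ∧ mu j = cm t v := by
      have hinjOn : Set.InjOn (fun v => J (cm t v)) ↑(Finset.univ.erase t) := by
        intro x hx y hy hxy
        have hxt : x ≠ t := (Finset.mem_erase.mp (Finset.mem_coe.mp hx)).1
        have hyt : y ≠ t := (Finset.mem_erase.mp (Finset.mem_coe.mp hy)).1
        have hcmeq : cm t x = cm t y := by
          rw [← hcmex t x (hNEt x hxt), ← hcmex t y (hNEt y hyt)]
          exact congrArg mu hxy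
        rcases hcmpair t x t y (hNEt x hxt) (hNEt y hyt) hcmeq with ⟨-, h⟩ | ⟨h, -⟩
        · exact h
        · exact absurd h.symm hyt
      have hcard : ((Finset.univ.erase t).image (fun v => J (cm t v))).card = n := by
        rw [Finset.card_image_of_injOn hinjOn, Finset.card_erase_of_mem (Finset.mem_univ t),
          Finset.card_univ, Fintype.card_fin]
        omega
      have huniv : (Finset.univ.erase t).image (fun v => J (cm t v)) = Finset.univ :=
        Finset.eq_univ_of_card _ (by rw [hcard, Fintype.card_fin])
      intro j
      have hj : j ∈ (Finset.univ.erase t).image (fun v => J (cm t v)) := by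
        rw [huniv]; exact Finset.mem_univ j
      obtain ⟨v, hv, hvj⟩ := Finset.mem_image.mp hj
      have hvt : v ≠ t := (Finset.mem_erase.mp hv).1
      refine ⟨v, hvt, ?_⟩
      rw [← hvj, hcmex t v (hNEt v hvt)]
    -- B3 zero facts
    have hmusq : ∀ j, ∃ v, v ≠ t ∧ (mu j = sq t v ∨ mu j = sq v t) := by
      intro j
      obtain ⟨v, hv, hj⟩ := hsurj j
      exact ⟨v, hv, hj ▸ (hcm t v (hNEt v hv)).2⟩
    have hsf0 : ∀ u v w, u ≠ v → u ≠ w → v ≠ w → f u v + f u w + f v w = 0 := by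
      intro u v w h1 h2 h3
      rw [← hsf u v w h1 h2 h3]
      by_contra hc
      obtain ⟨j, hj⟩ := hex _ hc (Or.inr ⟨u, v, w, h1, h2, h3, rfl⟩)
      obtain ⟨x, hx, hcase⟩ := hmusq j
      rcases hcase with h | h <;> rw [hj] at h <;>
        exact sq_ne_sf (by first | exact Ne.symm hx | exact hx) h1 h2 h3 h.symm
    have hsq0 : ∀ u v, u ≠ t → v ≠ t → u ≠ v → d u + f u v = 0 := by
      intro u v hut hvt huv
      rw [← hsq u v huv]
      by_contra hc
      obtain ⟨j, hj⟩ := hex _ hc (Or.inl ⟨u, v, huv, rfl⟩)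
      obtain ⟨x, hx, hcase⟩ := hmusq j
      rcases hcase with h | h <;> rw [hj] at h
      · exact hut (sq_inj huv (Ne.symm hx) h).1
      · exact hvt (sq_inj huv hx h).2
    -- pick three distinct elements ≠ t
    obtain ⟨p₁, p₂, p₃, hp12, hp13, hp23, hp1t, hp2t, hp3t⟩ :
        ∃ p₁ p₂ p₃ : Fin (n+1), p₁ ≠ p₂ ∧ p₁ ≠ p₃ ∧ p₂ ≠ p₃ ∧ p₁ ≠ t ∧ p₂ ≠ t ∧ p₃ ≠ t := by
      obtain ⟨s, hs, hcard3⟩ := Finset.exists_subset_card_eq (s := Finset.univ.erase t) (n := 3)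
        (by rw [Finset.card_erase_of_mem (Finset.mem_univ t), Finset.card_univ,
          Fintype.card_fin]; omega)
      obtain ⟨a, b, c, hab, hac, hbc, rfl⟩ := Finset.card_eq_three.mp hcard3
      have ha : a ∈ Finset.univ.erase t := hs (by simp)
      have hb : b ∈ Finset.univ.erase t := hs (by simp)
      have hc : c ∈ Finset.univ.erase t := hs (by simp)
      exact ⟨a, b, c, hab, hac, hbc, (Finset.mem_erase.mp ha).1, (Finset.mem_erase.mp hb).1,
        (Finset.mem_erase.mp hc).1⟩
    have hfe : ∀ u v, u ≠ t → v ≠ t → u ≠ v → f u v = -e' := by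
      intro u v hut hvt huv
      have := hsq0 u v hut hvt huv
      rw [ht2 u hut] at this
      linear_combination this
    have he'0 : e' = 0 := by
      have h := hsf0 p₁ p₂ p₃ hp12 hp13 hp23
      rw [hfe p₁ p₂ hp1t hp2t hp12, hfe p₁ p₃ hp1t hp3t hp13, hfe p₂ p₃ hp2t hp3t hp23] at h
      have h3 : (3 : k) * e' = 0 := by linear_combination -h
      rcases mul_eq_zero.mp h3 with h | h
      · exact absurd h three_ne_zero
      · exact h
    have hd0 : ∀ u, u ≠ t → d u = 0 := fun u hu => (ht2 u hu).trans he'0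
    have hf0 : ∀ u v, u ≠ t → v ≠ t → u ≠ v → f u v = 0 := by
      intro u v h1 h2 h3
      rw [hfe u v h1 h2 h3, he'0, neg_zero]
    have hft : ∀ u, u ≠ t → f t u = 0 := by
      intro u hu
      -- choose two of p₁,p₂,p₃ different from u
      obtain ⟨a, b, hab, hat, hbt, hau, hbu⟩ :
          ∃ a b, a ≠ b ∧ a ≠ t ∧ b ≠ t ∧ a ≠ u ∧ b ≠ u := by
        by_cases h1 : p₁ = u
        · exact ⟨p₂, p₃, hp23, hp2t, hp3t, by rw [← h1]; exact Ne.symm hp12,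
            by rw [← h1]; exact Ne.symm hp13⟩
        · by_cases h2 : p₂ = u
          · exact ⟨p₁, p₃, hp13, hp1t, hp3t, h1, by rw [← h2]; exact Ne.symm hp23⟩
          · exact ⟨p₁, p₂, hp12, hp1t, hp2t, h1, h2⟩
      have e1 := hsf0 t u a (Ne.symm hu) (Ne.symm hat) (Ne.symm hau)
      have e2 := hsf0 t u b (Ne.symm hu) (Ne.symm hbt) (Ne.symm hbu)
      have e3 := hsf0 t a b (Ne.symm hat) (Ne.symm hbt) hab
      rw [hf0 u a hu hat (Ne.symm hau)] at e1
      rw [hf0 u b hu hbt (Ne.symm hbu)] at e2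
      rw [hf0 a b hat hbt hab] at e3
      linear_combination (1/2 : k) * e1 + (1/2 : k) * e2 - (1/2 : k) * e3
    have hsqvt0 : ∀ v, v ≠ t → cE (sq v t) = 0 := by
      intro v hv
      rw [hsq v t hv, hd0 v hv, hfsymm v t, hft v hv, add_zero]
    have hcmeq : ∀ v, v ≠ t → cm t v = sq t v := by
      intro v hv
      rcases (hcm t v (hNEt v hv)).2 with h | h
      · exact h
      · exfalso
        exact (hcm t v (hNEt v hv)).1 (h ▸ hsqvt0 v hv)
    refine ⟨t, ?_, ?_⟩
    · intro j
      obtain ⟨v, hv, hj⟩ := hsurj j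
      exact ⟨v, hv, by rw [hj, hcmeq v hv]⟩
    · intro v hv
      exact ⟨J (cm t v), by rw [hcmex t v (hNEt v hv), hcmeq v hv]⟩

end Stmt18

open Stmt18 in
theorem stmt_18 (k : Type*) [Field k] [CharZero k] (n : ℕ) (hn : 5 ≤ n)
    (m : Fin n → Fin (n + 1) → ℕ) (hdeg : ∀ j, ∑ s, m j s = 3)
    (hinj : Function.Injective m)
    (hcube : ∀ j t, m j ≠ fun s => if s = t then 3 else 0)
    (hdep : ∃ (c : Fin (n + 1) → k) (b : Fin n → k), (c ≠ 0 ∨ b ≠ 0) ∧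
      (∑ t, c t • X t ^ 3) + (∑ j, b j • ∏ s, X s ^ m j s) ∈
        Ideal.span {(∑ t, X t : MvPolynomial (Fin (n + 1)) k)})
    (hmin : ∀ S : Finset (Fin n), S ≠ Finset.univ →
      ¬ ∃ (c : Fin (n + 1) → k) (b : Fin n → k),
        ((c ≠ 0 ∨ ∃ j ∈ S, b j ≠ 0) ∧ (∀ j ∉ S, b j = 0) ∧
          (∑ t, c t • X t ^ 3) + (∑ j, b j • ∏ s, X s ^ m j s) ∈
            Ideal.span {(∑ t, X t : MvPolynomial (Fin (n + 1)) k)})) :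
    ∃ σ : Equiv.Perm (Fin (n + 1)),
      (fun a => a ∘ σ) '' Set.range m =
        Set.range (fun t : Fin n => fun s : Fin (n + 1) =>
          if s = 0 then 2 else if s = t.succ then (1 : ℕ) else 0) := by
  classical
  obtain ⟨c, b, hcb, hmem⟩ := hdep
  obtain ⟨q, hq⟩ : (∑ t, X t : MvPolynomial (Fin (n + 1)) k) ∣
      (∑ t, c t • X t ^ 3) + (∑ j, b j • ∏ s, X s ^ m j s) :=
    Ideal.mem_span_singleton.mp hmem
  set E : MvPolynomial (Fin (n+1)) k :=
    (∑ t, c t • X t ^ 3) + (∑ j, b j • ∏ s, X s ^ m j s) with hEdef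
  set mu : Fin n → Fin (n+1) →₀ ℕ := fun j => Finsupp.equivFunOnFinite.symm (m j) with hmudef
  have hmuapp : ∀ j s, mu j s = m j s := fun j s => rfl
  have hmuinj : Function.Injective mu := by
    intro j j' hjj
    apply hinj
    funext s
    rw [← hmuapp j s, ← hmuapp j' s, hjj]
  have hprod : ∀ j, (∏ s, X s ^ m j s : MvPolynomial (Fin (n+1)) k) = monomial (mu j) 1 := by
    intro j
    rw [← prod_X_pow_eq_monomial]
    exact (Finset.prod_subset (Finset.subset_univ _) fun x _ hx => by
      have h0 : m j x = 0 := Finsupp.notMem_support_iff.mp hx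
      rw [h0, pow_zero]).symm
  have hcoeffE : ∀ μ, coeff μ E =
      (∑ t, if Finsupp.single t 3 = μ then c t else 0) +
      (∑ j, if mu j = μ then b j else 0) := by
    intro μ
    rw [hEdef, coeff_add, coeff_sum, coeff_sum]
    congr 1
    · refine Finset.sum_congr rfl fun t _ => ?_
      rw [coeff_smul, coeff_X_pow, smul_eq_mul, mul_ite, mul_one, mul_zero]
    · refine Finset.sum_congr rfl fun j _ => ?_
      rw [coeff_smul, hprod j, coeff_monomial, smul_eq_mul, mul_ite, mul_one, mul_zero]
  -- shapes
  have hshape : ∀ j, (∃ u v, u ≠ v ∧ mu j = sq u v) ∨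
      (∃ u v w, u ≠ v ∧ u ≠ w ∧ v ≠ w ∧ mu j = sf u v w) := by
    intro j
    rcases shape3 (m j) (hdeg j) (hcube j) with ⟨u, v, huv, hval⟩ | ⟨u, v, w, h1, h2, h3, hval⟩
    · left
      refine ⟨u, v, huv, Finsupp.ext fun s => ?_⟩
      rw [hmuapp, sq_apply, hval]
    · right
      refine ⟨u, v, w, h1, h2, h3, Finsupp.ext fun s => ?_⟩
      rw [hmuapp, sf_apply, hval]
  have hnotcube : ∀ j t, Finsupp.single t 3 ≠ mu j := by
    intro j t hc
    rcases hshape j with ⟨u, v, huv, hval⟩ | ⟨u, v, w, h1, h2, h3, hval⟩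
    · exact sq_ne_cube huv (hval ▸ hc.symm)
    · exact sf_ne_cube h1 h2 h3 (hval ▸ hc.symm)
  have hcoeffmu : ∀ j, coeff (mu j) E = b j := by
    intro j
    rw [hcoeffE, Finset.sum_eq_zero (fun t _ => if_neg (hnotcube j t)), zero_add,
      Finset.sum_eq_single j]
    · rw [if_pos rfl]
    · intro j' _ hj'
      exact if_neg fun hc => hj' (hmuinj hc)
    · intro hj
      exact absurd (Finset.mem_univ j) hj
  -- all b j are nonzero, via minimality
  have hBne : ∀ j, b j ≠ 0 := by
    intro j0 hb0
    apply hmin (Finset.univ.filter (fun j => b j ≠ 0))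
    · intro hS
      have hmem0 : j0 ∈ Finset.univ.filter (fun j => b j ≠ 0) := by
        rw [hS]; exact Finset.mem_univ j0
      exact (Finset.mem_filter.mp hmem0).2 hb0
    refine ⟨c, b, ?_, ?_, hmem⟩
    · rcases hcb with hc | hb
      · exact Or.inl hc
      · right
        obtain ⟨j1, hj1⟩ := Function.ne_iff.mp hb
        exact ⟨j1, Finset.mem_filter.mpr ⟨Finset.mem_univ _, hj1⟩, hj1⟩
    · intro j hj
      by_contra hbj
      exact hj (Finset.mem_filter.mpr ⟨Finset.mem_univ _, hbj⟩)
  -- data for the core lemma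
  set d : Fin (n+1) → k := fun u => coeff (Finsupp.single u 2) q with hddef
  set f : Fin (n+1) → Fin (n+1) → k :=
    fun u v => coeff (Finsupp.single u 1 + Finsupp.single v 1) q with hfdef
  have hfsymm : ∀ u v, f u v = f v u := by
    intro u v
    simp only [hfdef]
    exact congrArg (fun μ => coeff μ q) (add_comm _ _)
  have hcEsq : ∀ u v : Fin (n+1), u ≠ v → coeff (sq u v) E = d u + f u v := by
    intro u v huv
    rw [hq, coeff_ell_mul_sq q huv]
  have hcEsf : ∀ u v w : Fin (n+1), u ≠ v → u ≠ w → v ≠ w →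
      coeff (sf u v w) E = f u v + f u w + f v w := by
    intro u v w h1 h2 h3
    rw [hq, coeff_ell_mul_sf q h1 h2 h3]
    ring
  have hexC : ∀ μ, coeff μ E ≠ 0 →
      ((∃ u v, u ≠ v ∧ μ = sq u v) ∨ (∃ u v w, u ≠ v ∧ u ≠ w ∧ v ≠ w ∧ μ = sf u v w)) →
      ∃ j, mu j = μ := by
    intro μ hne hsh
    by_contra hno
    push_neg at hno
    apply hne
    rw [hcoeffE, Finset.sum_eq_zero (fun j _ => if_neg (hno j)), add_zero]
    apply Finset.sum_eq_zero
    intro t _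
    apply if_neg
    rcases hsh with ⟨u, v, huv, rfl⟩ | ⟨u, v, w, h1, h2, h3, rfl⟩
    · exact fun hc => sq_ne_cube huv hc.symm
    · exact fun hc => sf_ne_cube h1 h2 h3 hc.symm
  obtain ⟨t₀, hall, hsur⟩ := core hn mu hmuinj d f hfsymm (fun μ => coeff μ E)
    hcEsq hcEsf hshape hexC (fun j => by
      show coeff (mu j) E ≠ 0
      rw [hcoeffmu]; exact hBne j)
  -- final conversion
  set σ : Equiv.Perm (Fin (n+1)) := Equiv.swap 0 t₀ with hσdef
  have hσ0 : σ 0 = t₀ := Equiv.swap_apply_left 0 t₀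
  have hσt : σ t₀ = 0 := Equiv.swap_apply_right 0 t₀
  have hσσ : ∀ x, σ (σ x) = x := fun x => Equiv.swap_apply_self 0 t₀ x
  have hmval : ∀ j v, mu j = sq t₀ v → ∀ x, m j x =
      (if x = t₀ then 2 else 0) + (if x = v then 1 else 0) := by
    intro j v hj x
    rw [← hmuapp j x, hj, sq_apply]
  refine ⟨σ, ?_⟩
  ext a
  simp only [Set.mem_image, Set.mem_range]
  constructor
  · rintro ⟨_, ⟨j, rfl⟩, rfl⟩
    obtain ⟨v, hvt, hjv⟩ := hall j
    have hσv : (σ v : Fin (n+1)) ≠ 0 := by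
      intro hc
      exact hvt (σ.injective (hc.trans hσt.symm))
    refine ⟨(σ v).pred hσv, ?_⟩
    funext x
    show _ = m j (σ x)
    rw [hmval j v hjv (σ x), Fin.succ_pred]
    by_cases hx : x = 0
    · rw [hx, hσ0, if_pos rfl, if_pos rfl, if_neg (Ne.symm hvt), add_zero]
    · have hσxt : σ x ≠ t₀ := by
        intro hc
        exact hx (σ.injective (hc.trans hσ0.symm))
      rw [if_neg hx, if_neg hσxt, zero_add]
      by_cases hxv : x = σ v
      · rw [if_pos hxv, hxv, hσσ, if_pos rfl]
      · rw [if_neg hxv, if_neg (fun hc : σ x = v => hxv (by rw [← hc, hσσ]))]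
  · rintro ⟨u, rfl⟩
    have hvt : σ u.succ ≠ t₀ := by
      intro hc
      exact Fin.succ_ne_zero u (σ.injective (hc.trans hσ0.symm))
    obtain ⟨j, hj⟩ := hsur (σ u.succ) hvt
    refine ⟨m j, ⟨j, rfl⟩, ?_⟩
    funext x
    show m j (σ x) = _
    rw [hmval j (σ u.succ) hj (σ x)]
    by_cases hx : x = 0
    · rw [hx, hσ0, if_pos rfl, if_pos rfl, if_neg (Ne.symm hvt), add_zero]
    · have hσxt : σ x ≠ t₀ := by
        intro hc
        exact hx (σ.injective (hc.trans hσ0.symm))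
      rw [if_neg hx, if_neg hσxt, zero_add]
      by_cases hxu : x = u.succ
      · rw [if_pos hxu, hxu, if_pos rfl]
      · rw [if_neg hxu, if_neg (fun hc : σ x = σ u.succ => hxu (σ.injective hc))]
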